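/- Let Σ be a symmetric positive-definite m×m real matrix with positive-definite square root Σ^{1/2}, let v ∈ ℝ^m, let x₁, …, x_n ∈ ℝ^m, and let g : (0, ∞) → (0, ∞) be differentiable with ψ(t) = g'(t)/g(t). For μ ∈ ℝ^m write tᵢ(μ) = (xᵢ − μ)ᵀ Σ⁻¹ (xᵢ − μ) and zᵢ(μ) = Σ^{−1/2}(xᵢ − μ)/√(tᵢ(μ)). Then at every μ with tᵢ(μ) > 0 for all i, the function L(μ) = Σᵢ (vᵀ zᵢ(μ) + log g(tᵢ(μ))) is differentiable, and its gradient equals Σᵢ ( −Σ^{−1/2} v / √(tᵢ(μ)) + (vᵀ zᵢ(μ) / tᵢ(μ)) Σ⁻¹(xᵢ − μ) − 2 ψ(tᵢ(μ)) Σ⁻¹(xᵢ − μ) ). -/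

import Mathlib

open Matrix

/-- The μ-dependent part of the vMF elliptical log-likelihood,
`L(μ) = Σᵢ (vᵀ zᵢ(μ) + log g(tᵢ(μ)))`, is differentiable at every `μ` with all
`tᵢ(μ) > 0`, with gradient
`Σᵢ ( −Σ^{−1/2} v / √tᵢ + (vᵀ zᵢ / tᵢ) Σ⁻¹(xᵢ − μ) − 2 ψ(tᵢ) Σ⁻¹(xᵢ − μ) )`. -/
theorem vMF_loglikelihood_gradient
    {m n : ℕ}
    (Sig S : Matrix (Fin m) (Fin m) ℝ)
    (hSig : Sig.PosDef) (hS : S.PosDef) (hSsq : S * S = Sig)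
    (v : EuclideanSpace ℝ (Fin m)) (x : Fin n → EuclideanSpace ℝ (Fin m))
    (g g' : ℝ → ℝ)
    (hgpos : ∀ s > (0 : ℝ), 0 < g s)
    (hg' : ∀ s > (0 : ℝ), HasDerivAt g (g' s) s)
    (ψ : ℝ → ℝ) (hψ : ∀ s > (0 : ℝ), ψ s = g' s / g s)
    (t : EuclideanSpace ℝ (Fin m) → Fin n → ℝ)
    (ht : ∀ μ i, t μ i = (x i - μ) ⬝ᵥ Sig⁻¹.mulVec (x i - μ))
    (z : EuclideanSpace ℝ (Fin m) → Fin n → EuclideanSpace ℝ (Fin m))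
    (hz : ∀ μ i, z μ i =
      (Real.sqrt (t μ i))⁻¹ • (WithLp.toLp 2 (S⁻¹.mulVec (x i - μ)) : EuclideanSpace ℝ (Fin m)))
    (w : EuclideanSpace ℝ (Fin m) → Fin n → EuclideanSpace ℝ (Fin m))
    (hw : ∀ μ i, w μ i = (WithLp.toLp 2 (Sig⁻¹.mulVec (x i - μ)) : EuclideanSpace ℝ (Fin m)))
    (u : EuclideanSpace ℝ (Fin m)) (hu : u = (WithLp.toLp 2 (S⁻¹.mulVec v) : EuclideanSpace ℝ (Fin m)))
    (L : EuclideanSpace ℝ (Fin m) → ℝ)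
    (hL : ∀ μ, L μ = ∑ i, (v ⬝ᵥ (z μ i : Fin m → ℝ) + Real.log (g (t μ i)))) :
    ∀ μ : EuclideanSpace ℝ (Fin m), (∀ i, 0 < t μ i) →
      HasGradientAt L
        (∑ i, (-(Real.sqrt (t μ i))⁻¹ • u
          + ((v ⬝ᵥ (z μ i : Fin m → ℝ)) / t μ i) • w μ i
          - (2 * ψ (t μ i)) • w μ i)) μ := by
  classical
  intro μ hpos
  -- basic dictionary between inner products and dot products
  have key : ∀ a b : EuclideanSpace ℝ (Fin m),
      (inner ℝ a b : ℝ) = (a : Fin m → ℝ) ⬝ᵥ (b : Fin m → ℝ) := by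
    intro a b
    simp [PiLp.inner_apply, dotProduct, mul_comm]
  -- symmetry of the inverse matrices
  have hSigT : (Sig⁻¹)ᵀ = Sig⁻¹ := by
    rw [Matrix.transpose_nonsing_inv]
    congr 1
    rw [← Matrix.conjTranspose_eq_transpose_of_trivial]
    exact hSig.isHermitian.eq
  have hST : (S⁻¹)ᵀ = S⁻¹ := by
    rw [Matrix.transpose_nonsing_inv]
    congr 1
    rw [← Matrix.conjTranspose_eq_transpose_of_trivial]
    exact hS.isHermitian.eq
  -- matrix `Sig⁻¹` as a continuous linear map on Euclidean space
  set Mc : EuclideanSpace ℝ (Fin m) →L[ℝ] EuclideanSpace ℝ (Fin m) :=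
    Matrix.toEuclideanCLM (𝕜 := ℝ) Sig⁻¹ with hMcdef
  have hMc : ∀ a : EuclideanSpace ℝ (Fin m),
      Mc a = (WithLp.toLp 2 (Sig⁻¹.mulVec a) : EuclideanSpace ℝ (Fin m)) := fun a => rfl
  -- `t` in inner-product form
  have htfun : ∀ (μ' : EuclideanSpace ℝ (Fin m)) (i),
      t μ' i = (inner ℝ (x i - μ') (Mc (x i - μ')) : ℝ) := by
    intro μ' i
    rw [ht, key, hMc]
    rfl
  -- moving `Mc` across the inner product
  have hMcmove : ∀ a b : EuclideanSpace ℝ (Fin m),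
      (inner ℝ a (Mc b) : ℝ) = (inner ℝ (Mc a) b : ℝ) := by
    intro a b
    rw [key, key, hMc, hMc]
    show (a : Fin m → ℝ) ⬝ᵥ Sig⁻¹.mulVec b = Sig⁻¹.mulVec a ⬝ᵥ (b : Fin m → ℝ)
    rw [Matrix.dotProduct_mulVec, ← hSigT, Matrix.vecMul_transpose, hSigT]
  -- value of `v ⬝ᵥ z` in inner-product form
  have hvz : ∀ (μ' : EuclideanSpace ℝ (Fin m)) (i), v ⬝ᵥ (z μ' i : Fin m → ℝ)
      = (Real.sqrt (t μ' i))⁻¹ * (inner ℝ u (x i - μ') : ℝ) := by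
    intro μ' i
    rw [hz]
    have h1 : v ⬝ᵥ (((Real.sqrt (t μ' i))⁻¹ • (WithLp.toLp 2 (S⁻¹.mulVec (x i - μ')) : EuclideanSpace ℝ (Fin m))
          : EuclideanSpace ℝ (Fin m)) : Fin m → ℝ)
        = (Real.sqrt (t μ' i))⁻¹ * (v ⬝ᵥ S⁻¹.mulVec (x i - μ')) := by
      simp [dotProduct, PiLp.smul_apply, Finset.mul_sum, mul_left_comm, mul_comm, mul_assoc]
    rw [h1, key, hu]
    show (Real.sqrt (t μ' i))⁻¹ * (v ⬝ᵥ S⁻¹.mulVec (x i - μ'))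
      = (Real.sqrt (t μ' i))⁻¹ * (S⁻¹.mulVec v ⬝ᵥ (x i - μ' : Fin m → ℝ))
    rw [Matrix.dotProduct_mulVec, ← hST, Matrix.vecMul_transpose, hST]
  -- rewrite L
  have hLF : L = fun μ' : EuclideanSpace ℝ (Fin m) => ∑ i,
      ((Real.sqrt ((inner ℝ (x i - μ') (Mc (x i - μ')) : ℝ)))⁻¹ * (inner ℝ u (x i - μ') : ℝ)
        + Real.log (g ((inner ℝ (x i - μ') (Mc (x i - μ')) : ℝ)))) := by
    funext μ'
    rw [hL]
    refine Finset.sum_congr rfl fun i _ => ?_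
    rw [hvz, htfun μ' i]
  rw [hasGradientAt_iff_hasFDerivAt]
  -- per-summand derivative
  have hFi : ∀ i : Fin n,
      HasFDerivAt
        (fun μ' : EuclideanSpace ℝ (Fin m) =>
          (Real.sqrt ((inner ℝ (x i - μ') (Mc (x i - μ')) : ℝ)))⁻¹ * (inner ℝ u (x i - μ') : ℝ)
            + Real.log (g ((inner ℝ (x i - μ') (Mc (x i - μ')) : ℝ))))
        (InnerProductSpace.toDual ℝ (EuclideanSpace ℝ (Fin m))
          (-(Real.sqrt (t μ i))⁻¹ • u
            + ((v ⬝ᵥ (z μ i : Fin m → ℝ)) / t μ i) • w μ i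
            - (2 * ψ (t μ i)) • w μ i)) μ := by
    intro i
    have ht0 : 0 < t μ i := hpos i
    have hs0 : 0 < Real.sqrt (t μ i) := Real.sqrt_pos.mpr ht0
    have hd : HasFDerivAt (fun μ' : EuclideanSpace ℝ (Fin m) => x i - μ')
        (-(ContinuousLinearMap.id ℝ (EuclideanSpace ℝ (Fin m)))) μ := by
      have := (hasFDerivAt_const (𝕜 := ℝ) (x i) μ).sub (hasFDerivAt_id μ)
      simp only [zero_sub] at this
      exact this
    have hMcd : HasFDerivAt (fun μ' : EuclideanSpace ℝ (Fin m) => Mc (x i - μ'))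
        (Mc.comp (-(ContinuousLinearMap.id ℝ (EuclideanSpace ℝ (Fin m))))) μ :=
      Mc.hasFDerivAt.comp μ hd
    have hτ := hd.inner ℝ hMcd
    have hsq : HasDerivAt (fun s : ℝ => (Real.sqrt s)⁻¹)
        (-(1 / (2 * Real.sqrt (t μ i))) / (Real.sqrt (t μ i)) ^ 2) (t μ i) :=
      (Real.hasDerivAt_sqrt ht0.ne').inv hs0.ne'
    have hrc := hsq.comp_hasFDerivAt_of_eq μ hτ (htfun μ i)
    have hα := (hasFDerivAt_const u μ).inner ℝ hd
    have hgl : HasDerivAt (fun s : ℝ => Real.log (g s)) (g' (t μ i) / g (t μ i)) (t μ i) :=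
      (hg' _ ht0).log (hgpos _ ht0).ne'
    have hBc := hgl.comp_hasFDerivAt_of_eq μ hτ (htfun μ i)
    have htot := (hrc.mul hα).add hBc
    refine htot.congr_fderiv ?_
    ext h
    have hwMc : Mc (x i - μ) = w μ i := by rw [hMc, hw]; rfl
    have e1 : (inner ℝ (x i - μ) (Mc h) : ℝ) = (inner ℝ (w μ i) h : ℝ) := by
      rw [hMcmove, hwMc]
    have e2 : (inner ℝ h (Mc (x i - μ)) : ℝ) = (inner ℝ (w μ i) h : ℝ) := by
      rw [hwMc, real_inner_comm]
    simp only [ContinuousLinearMap.add_apply, ContinuousLinearMap.smul_apply,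
      ContinuousLinearMap.comp_apply, ContinuousLinearMap.prod_apply,
      ContinuousLinearMap.neg_apply, ContinuousLinearMap.coe_id', id_eq,
      ContinuousLinearMap.zero_apply, fderivInnerCLM_apply,
      InnerProductSpace.toDual_apply_apply, smul_eq_mul, Function.comp]
    rw [hvz μ i]
    simp only [map_neg, inner_neg_right, inner_neg_left, inner_zero_left, e1, e2]
    rw [← htfun μ i]
    simp only [inner_sub_left, inner_add_left, real_inner_smul_left, hψ _ ht0]
    set s := Real.sqrt (t μ i) with hsdef
    have hs : s ^ 2 = t μ i := Real.sq_sqrt ht0.le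
    rw [← hs]
    have hgpos' : g (t μ i) ≠ 0 := (hgpos _ ht0).ne'
    rw [← hs] at hgpos'
    have hs0' : s ≠ 0 := by positivity
    field_simp
    ring
  have hbig := HasFDerivAt.sum (u := Finset.univ) (fun i _ => hFi i)
  rw [hLF]
  convert hbig using 1
  · rfl
  · ext μ'
    simp [Finset.sum_apply]
  · ext μ'
    simp [Finset.sum_apply]
  · rw [← map_sum]
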